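/- Let p ≥ 3 and let f : ℝ² → ℝ be CPL with p pieces, with an admissible family of cone pieces P₁, …, P_p such that P₁ ∩ P₂ contains a line segment with two distinct endpoints (P₁ and P₂ are adjacent) and such that there is a linear functional ℓ : ℝ² → ℝ with ℓ(x) > 0 for all x ∈ (P₁ ∪ P₂) \ {0} (P₁ and P₂ enclose an angle less than π). Then there exists a function f′ : ℝ² → ℝ that is CPL with at most 3 pieces such that f − f′ is CPL with at most p − 1 pieces. -/

import Mathlib

open Set

noncomputable section

/-- The plane `ℝ²`, modeled as functions `Fin 2 → ℝ`. -/
abbrev E2 := Fin 2 → ℝ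

/-- `f : ℝ² → ℝ` is affine: `f x = ⟨a, x⟩ + b`. -/
def IsAffineFn (f : E2 → ℝ) : Prop :=
  ∃ (a : E2) (b : ℝ), ∀ x, f x = dotProduct a x + b

/-- `f : ℝ² → ℝ` is linear: `f x = ⟨a, x⟩`. -/
def IsLinearFn (f : E2 → ℝ) : Prop :=
  ∃ a : E2, ∀ x, f x = dotProduct a x

/-- An affine line in the plane. -/
def IsLine (l : Set E2) : Prop :=
  ∃ v u : E2, u ≠ 0 ∧ l = {x | ∃ t : ℝ, x = v + t • u}

/-- A polygonal piece: a regular closed set with nonempty connected interior whose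
frontier is contained in a finite union of affine lines. -/
def IsPolygonalPiece (P : Set E2) : Prop :=
  IsClosed P ∧ (interior P).Nonempty ∧ IsConnected (interior P) ∧
    P = closure (interior P) ∧
    ∃ (m : ℕ) (L : Fin m → Set E2), (∀ i, IsLine (L i)) ∧ frontier P ⊆ ⋃ i, L i

/-- `Ps` is an admissible family of pieces for `f`. -/
def IsAdmissible (f : E2 → ℝ) (Ps : Finset (Set E2)) : Prop :=
  (∀ P ∈ Ps, IsPolygonalPiece P) ∧
  (⋃ P ∈ Ps, P) = univ ∧
  (∀ P ∈ Ps, ∀ Q ∈ Ps, P ≠ Q → P ∩ Q = frontier P ∩ frontier Q) ∧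
  (∀ P ∈ Ps, ∃ g : E2 → ℝ, IsAffineFn g ∧ EqOn f g P)

/-- `f` is continuous piecewise affine with (at most) `p` pieces. -/
def IsCPA (p : ℕ) (f : E2 → ℝ) : Prop :=
  Continuous f ∧ ∃ Ps : Finset (Set E2), Ps.card ≤ p ∧ IsAdmissible f Ps

/-- `P` is a cone with apex `v`. -/
def IsConeWithApex (v : E2) (P : Set E2) : Prop :=
  ∀ x ∈ P, ∀ t : ℝ, 0 ≤ t → v + t • (x - v) ∈ P

/-- A `v`-function with (at most) `p` pieces: a CPA function admitting an admissible
family of pieces all of which are cones with apex `v`. -/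
def IsVFunction (v : E2) (p : ℕ) (f : E2 → ℝ) : Prop :=
  Continuous f ∧ ∃ Ps : Finset (Set E2), Ps.card ≤ p ∧ IsAdmissible f Ps ∧
    ∀ P ∈ Ps, IsConeWithApex v P

/-- A CPL function with (at most) `p` pieces: a `0`-function whose affine components
are linear. -/
def IsCPL (p : ℕ) (f : E2 → ℝ) : Prop :=
  Continuous f ∧ ∃ Ps : Finset (Set E2), Ps.card ≤ p ∧ IsAdmissible f Ps ∧
    (∀ P ∈ Ps, IsConeWithApex 0 P) ∧
    ∀ P ∈ Ps, ∃ g : E2 → ℝ, IsLinearFn g ∧ EqOn f g P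

/-- Componentwise ReLU. -/
def relu {n : ℕ} (x : Fin n → ℝ) : Fin n → ℝ := fun i => max 0 (x i)

/-! ### Auxiliary: planar linear algebra -/

/-- Dot product in the plane, written out. -/
def dot2 (a x : E2) : ℝ := a 0 * x 0 + a 1 * x 1

/-- Cross product (determinant) in the plane. -/
def cross2 (u v : E2) : ℝ := u 0 * v 1 - u 1 * v 0

lemma dotProduct_eq_dot2 (a x : E2) : dotProduct a x = dot2 a x := by
  simp [dotProduct, Fin.sum_univ_two, dot2]

lemma isLinearFn_iff (f : E2 → ℝ) : IsLinearFn f ↔ ∃ a : E2, ∀ x, f x = dot2 a x := by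
  unfold IsLinearFn
  refine exists_congr fun a => forall_congr' fun x => ?_
  rw [dotProduct_eq_dot2]

lemma isLinearFn_of (p q : ℝ) : IsLinearFn (fun x => p * x 0 + q * x 1) := by
  rw [isLinearFn_iff]
  exact ⟨fun i => if i = 0 then p else q, fun x => by simp [dot2]⟩

lemma IsLinearFn.isAffineFn {f : E2 → ℝ} (h : IsLinearFn f) : IsAffineFn f := by
  obtain ⟨a, ha⟩ := h
  exact ⟨a, 0, fun x => by rw [ha, add_zero]⟩

@[simp] lemma cross2_self (u : E2) : cross2 u u = 0 := by simp [cross2]; ring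

lemma cross2_anticomm (u v : E2) : cross2 u v = - cross2 v u := by simp [cross2]; ring

lemma cross2_add_left (x y v : E2) : cross2 (x + y) v = cross2 x v + cross2 y v := by
  simp [cross2, Pi.add_apply]; ring

lemma cross2_add_right (u x y : E2) : cross2 u (x + y) = cross2 u x + cross2 u y := by
  simp [cross2, Pi.add_apply]; ring

lemma cross2_smul_left (r : ℝ) (x v : E2) : cross2 (r • x) v = r * cross2 x v := by
  simp [cross2, Pi.smul_apply, smul_eq_mul]; ring

lemma cross2_smul_right (r : ℝ) (u x : E2) : cross2 u (r • x) = r * cross2 u x := by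
  simp [cross2, Pi.smul_apply, smul_eq_mul]; ring

lemma cross2_comb_left (r s : ℝ) (x y v : E2) :
    cross2 (r • x + s • y) v = r * cross2 x v + s * cross2 y v := by
  rw [cross2_add_left, cross2_smul_left, cross2_smul_left]

lemma cross2_comb_right (r s : ℝ) (u x y : E2) :
    cross2 u (r • x + s • y) = r * cross2 u x + s * cross2 u y := by
  rw [cross2_add_right, cross2_smul_right, cross2_smul_right]

lemma cross2_ne_zero_left {u v : E2} (h : cross2 u v ≠ 0) : u ≠ 0 := by
  rintro rfl; apply h; simp [cross2]

lemma cross2_ne_zero_right {u v : E2} (h : cross2 u v ≠ 0) : v ≠ 0 := by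
  rintro rfl; apply h; simp [cross2]

/-- If `cross2 u v = 0` and `u ≠ 0` then `v` is a multiple of `u`. -/
lemma exists_smul_of_cross2_eq_zero {u v : E2} (hu : u ≠ 0) (h : cross2 u v = 0) :
    ∃ k : ℝ, v = k • u := by
  have h0 : u 0 ≠ 0 ∨ u 1 ≠ 0 := by
    by_contra hc
    push_neg at hc
    exact hu (funext fun i => by fin_cases i <;> simp [hc.1, hc.2])
  rcases h0 with h0 | h1
  · refine ⟨v 0 / u 0, funext fun i => ?_⟩
    fin_cases i
    · simp [Pi.smul_apply, smul_eq_mul]; field_simp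
    · simp only [Pi.smul_apply, smul_eq_mul]
      unfold cross2 at h
      field_simp
      simp only [Fin.mk_one, Fin.zero_eta] at *
      linarith [h]
  · refine ⟨v 1 / u 1, funext fun i => ?_⟩
    fin_cases i
    · simp only [Pi.smul_apply, smul_eq_mul]
      unfold cross2 at h
      field_simp
      simp only [Fin.mk_one, Fin.zero_eta] at *
      linarith [h]
    · simp [Pi.smul_apply, smul_eq_mul]; field_simp

/-- Decomposition of a vector in the basis `u, v`. -/
lemma funext2 {x y : E2} (h0 : x 0 = y 0) (h1 : x 1 = y 1) : x = y :=
  funext fun i => by fin_cases i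
                     · exact h0
                     · exact h1

lemma cross2_decomp {u v : E2} (h : cross2 u v ≠ 0) (x : E2) :
    x = (cross2 x v / cross2 u v) • u + (cross2 u x / cross2 u v) • v := by
  have key : ∀ i : Fin 2, x i = (cross2 x v / cross2 u v) * u i + (cross2 u x / cross2 u v) * v i := by
    have h' : u 0 * v 1 - u 1 * v 0 ≠ 0 := h
    rw [Fin.forall_fin_two]
    constructor <;> (unfold cross2; rw [div_mul_eq_mul_div, div_mul_eq_mul_div, ← add_div, eq_div_iff h']; ring)
  apply funext2 <;>
    simpa only [Pi.add_apply, Pi.smul_apply, smul_eq_mul] using (by first | exact key 0 | exact key 1)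

lemma cross2_coord_unique {u v : E2} (h : cross2 u v ≠ 0) {r s : ℝ} {x : E2}
    (hx : x = r • u + s • v) : r = cross2 x v / cross2 u v ∧ s = cross2 u x / cross2 u v := by
  constructor
  · rw [hx, cross2_comb_left]
    field_simp
    simp
  · rw [hx, cross2_comb_right]
    field_simp
    simp
/-! ### The cone spanned by two vectors -/

/-- The convex cone generated by `u` and `v`. -/
def Qc (u v : E2) : Set E2 := {x | ∃ r s : ℝ, 0 ≤ r ∧ 0 ≤ s ∧ x = r • u + s • v}

/-- First coordinate of `x` in the basis `u, v`. -/
def rc2 (u v x : E2) : ℝ := cross2 x v / cross2 u v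

/-- Second coordinate of `x` in the basis `u, v`. -/
def sc2 (u v x : E2) : ℝ := cross2 u x / cross2 u v

lemma rc2_decomp {u v : E2} (h : cross2 u v ≠ 0) (x : E2) :
    x = rc2 u v x • u + sc2 u v x • v := cross2_decomp h x

lemma rc2_comb {u v : E2} (h : cross2 u v ≠ 0) (r s : ℝ) (x y : E2) :
    rc2 u v (r • x + s • y) = r * rc2 u v x + s * rc2 u v y := by
  unfold rc2; rw [cross2_comb_left]; ring

lemma sc2_comb {u v : E2} (h : cross2 u v ≠ 0) (r s : ℝ) (x y : E2) :
    sc2 u v (r • x + s • y) = r * sc2 u v x + s * sc2 u v y := by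
  unfold sc2; rw [cross2_comb_right]; ring

@[simp] lemma rc2_self_left {u v : E2} (h : cross2 u v ≠ 0) : rc2 u v u = 1 := by
  unfold rc2; field_simp
@[simp] lemma rc2_self_right {u v : E2} (h : cross2 u v ≠ 0) : rc2 u v v = 0 := by
  unfold rc2; simp
@[simp] lemma sc2_self_left {u v : E2} (h : cross2 u v ≠ 0) : sc2 u v u = 0 := by
  unfold sc2; simp
@[simp] lemma sc2_self_right {u v : E2} (h : cross2 u v ≠ 0) : sc2 u v v = 1 := by
  unfold sc2; field_simp

lemma rc2_smul {u v : E2} (h : cross2 u v ≠ 0) (t : ℝ) (x : E2) :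
    rc2 u v (t • x) = t * rc2 u v x := by
  unfold rc2; rw [cross2_smul_left]; ring

lemma sc2_smul {u v : E2} (h : cross2 u v ≠ 0) (t : ℝ) (x : E2) :
    sc2 u v (t • x) = t * sc2 u v x := by
  unfold sc2; rw [cross2_smul_right]; ring

lemma rc2_add_smul {u v : E2} (h : cross2 u v ≠ 0) (x y : E2) (c : ℝ) :
    rc2 u v (x + c • y) = rc2 u v x + c * rc2 u v y := by
  have := rc2_comb h 1 c x y; simpa using this

lemma sc2_add_smul {u v : E2} (h : cross2 u v ≠ 0) (x y : E2) (c : ℝ) :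
    sc2 u v (x + c • y) = sc2 u v x + c * sc2 u v y := by
  have := sc2_comb h 1 c x y; simpa using this

lemma rc2_sub_smul {u v : E2} (h : cross2 u v ≠ 0) (x y : E2) (c : ℝ) :
    rc2 u v (x - c • y) = rc2 u v x - c * rc2 u v y := by
  have := rc2_add_smul h x y (-c); rw [neg_smul] at this
  rw [sub_eq_add_neg, this]; ring

lemma sc2_sub_smul {u v : E2} (h : cross2 u v ≠ 0) (x y : E2) (c : ℝ) :
    sc2 u v (x - c • y) = sc2 u v x - c * sc2 u v y := by
  have := sc2_add_smul h x y (-c); rw [neg_smul] at this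
  rw [sub_eq_add_neg, this]; ring

lemma mem_Qc_iff {u v : E2} (h : cross2 u v ≠ 0) (x : E2) :
    x ∈ Qc u v ↔ 0 ≤ rc2 u v x ∧ 0 ≤ sc2 u v x := by
  constructor
  · rintro ⟨r, s, hr, hs, rfl⟩
    obtain ⟨h1, h2⟩ := cross2_coord_unique h (rfl : r • u + s • v = r • u + s • v)
    exact ⟨by rw [rc2, ← h1]; exact hr, by rw [sc2, ← h2]; exact hs⟩
  · rintro ⟨h1, h2⟩
    exact ⟨_, _, h1, h2, rc2_decomp h x⟩

lemma comb_mem_Qc {u v : E2} {r s : ℝ} (hr : 0 ≤ r) (hs : 0 ≤ s) :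
    r • u + s • v ∈ Qc u v := ⟨r, s, hr, hs, rfl⟩

lemma left_mem_Qc (u v : E2) : u ∈ Qc u v := ⟨1, 0, zero_le_one, le_refl 0, by simp⟩
lemma right_mem_Qc (u v : E2) : v ∈ Qc u v := ⟨0, 1, le_refl 0, zero_le_one, by simp⟩
lemma zero_mem_Qc (u v : E2) : (0 : E2) ∈ Qc u v := ⟨0, 0, le_refl 0, le_refl 0, by simp⟩

lemma continuous_rc2 (u v : E2) : Continuous (rc2 u v) := by
  unfold rc2 cross2
  fun_prop

lemma continuous_sc2 (u v : E2) : Continuous (sc2 u v) := by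
  unfold sc2 cross2
  fun_prop

lemma isClosed_Qc {u v : E2} (h : cross2 u v ≠ 0) : IsClosed (Qc u v) := by
  have : Qc u v = (rc2 u v) ⁻¹' (Ici 0) ∩ (sc2 u v) ⁻¹' (Ici 0) := by
    ext x; simp [mem_Qc_iff h, mem_preimage, mem_Ici]
  rw [this]
  exact ((isClosed_Ici.preimage (continuous_rc2 u v))).inter
    (isClosed_Ici.preimage (continuous_sc2 u v))

lemma Qc_cone (u v : E2) : IsConeWithApex 0 (Qc u v) := by
  rintro x ⟨r, s, hr, hs, rfl⟩ t ht
  refine ⟨t * r, t * s, mul_nonneg ht hr, mul_nonneg ht hs, ?_⟩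
  simp [smul_add, smul_smul]

lemma Qc_comm (u v : E2) : Qc u v = Qc v u := by
  ext x
  constructor <;> rintro ⟨r, s, hr, hs, rfl⟩ <;> exact ⟨s, r, hs, hr, add_comm _ _⟩

lemma Qc_smul_right {t : ℝ} (ht : 0 < t) (u v : E2) : Qc u (t • v) = Qc u v := by
  ext x
  constructor <;> rintro ⟨r, s, hr, hs, rfl⟩
  · exact ⟨r, s * t, hr, mul_nonneg hs ht.le, by rw [smul_smul]⟩
  · exact ⟨r, s / t, hr, div_nonneg hs ht.le, by rw [smul_smul, div_mul_cancel₀ _ ht.ne']⟩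

lemma Qc_smul_left {t : ℝ} (ht : 0 < t) (u v : E2) : Qc (t • u) v = Qc u v := by
  rw [Qc_comm, Qc_smul_right ht, Qc_comm]

lemma interior_Qc {u v : E2} (h : cross2 u v ≠ 0) :
    interior (Qc u v) = {x | 0 < rc2 u v x ∧ 0 < sc2 u v x} := by
  apply Subset.antisymm
  · intro x hx
    have hxQ : x ∈ Qc u v := interior_subset hx
    rw [mem_Qc_iff h] at hxQ
    obtain ⟨ε, hε, hball⟩ := Metric.mem_nhds_iff.mp (mem_interior_iff_mem_nhds.mp hx)
    constructor
    · rcases hxQ.1.lt_or_eq with h1 | h1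
      · exact h1
      · exfalso
        set δ := ε / (‖u‖ + 1) with hδ
        have hδpos : 0 < δ := div_pos hε (by positivity)
        have hy : x - δ • u ∈ Metric.ball x ε := by
          rw [Metric.mem_ball, dist_eq_norm]
          have : x - δ • u - x = -(δ • u) := by abel
          rw [this, norm_neg, norm_smul, Real.norm_eq_abs, abs_of_pos hδpos]
          calc δ * ‖u‖ < δ * (‖u‖ + 1) := by nlinarith [hδpos, norm_nonneg u]
            _ = ε * ((‖u‖+1) / (‖u‖+1)) := by rw [hδ]; ring
            _ = ε := by rw [div_self (by positivity)]; ring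
        have := (mem_Qc_iff h _).mp (hball hy)
        rw [rc2_sub_smul h, rc2_self_left h, ← h1] at this
        linarith [this.1, hδpos]
    · rcases hxQ.2.lt_or_eq with h1 | h1
      · exact h1
      · exfalso
        set δ := ε / (‖v‖ + 1) with hδ
        have hδpos : 0 < δ := div_pos hε (by positivity)
        have hy : x - δ • v ∈ Metric.ball x ε := by
          rw [Metric.mem_ball, dist_eq_norm]
          have : x - δ • v - x = -(δ • v) := by abel
          rw [this, norm_neg, norm_smul, Real.norm_eq_abs, abs_of_pos hδpos]
          calc δ * ‖v‖ < δ * (‖v‖ + 1) := by nlinarith [hδpos, norm_nonneg v]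
            _ = ε * ((‖v‖+1) / (‖v‖+1)) := by rw [hδ]; ring
            _ = ε := by rw [div_self (by positivity)]; ring
        have := (mem_Qc_iff h _).mp (hball hy)
        rw [sc2_sub_smul h, sc2_self_right h, ← h1] at this
        linarith [this.2, hδpos]
  · have hopen : IsOpen {x | 0 < rc2 u v x ∧ 0 < sc2 u v x} := by
      have : {x | 0 < rc2 u v x ∧ 0 < sc2 u v x}
          = (rc2 u v) ⁻¹' (Ioi 0) ∩ (sc2 u v) ⁻¹' (Ioi 0) := rfl
      rw [this]
      exact (isOpen_Ioi.preimage (continuous_rc2 u v)).inter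
        (isOpen_Ioi.preimage (continuous_sc2 u v))
    exact hopen.subset_interior_iff.mpr
      (fun x hx => (mem_Qc_iff h x).mpr ⟨hx.1.le, hx.2.le⟩)

lemma rc2_add_self {u v : E2} (h : cross2 u v ≠ 0) : rc2 u v (u + v) = 1 := by
  have := rc2_add_smul h u v 1
  rw [one_smul, rc2_self_left h, rc2_self_right h] at this
  rw [this]; ring

lemma sc2_add_self {u v : E2} (h : cross2 u v ≠ 0) : sc2 u v (u + v) = 1 := by
  have := sc2_add_smul h u v 1
  rw [one_smul, sc2_self_left h, sc2_self_right h] at this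
  rw [this]; ring

lemma add_mem_interior_Qc {u v : E2} (h : cross2 u v ≠ 0) : u + v ∈ interior (Qc u v) := by
  rw [interior_Qc h]
  exact ⟨by rw [rc2_add_self h]; norm_num, by rw [sc2_add_self h]; norm_num⟩

lemma closure_interior_Qc {u v : E2} (h : cross2 u v ≠ 0) :
    closure (interior (Qc u v)) = Qc u v := by
  apply Subset.antisymm
  · exact closure_minimal interior_subset (isClosed_Qc h)
  · intro x hx
    rw [mem_Qc_iff h] at hx
    rw [Metric.mem_closure_iff]
    intro ε hε
    set δ := ε / (‖u + v‖ + 1) with hδ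
    have hδpos : 0 < δ := div_pos hε (by positivity)
    refine ⟨x + δ • (u + v), ?_, ?_⟩
    · rw [interior_Qc h]
      constructor
      · rw [rc2_add_smul h, rc2_add_self h]
        linarith [hx.1, hδpos]
      · rw [sc2_add_smul h, sc2_add_self h]
        linarith [hx.2, hδpos]
    · rw [dist_eq_norm]
      have : x - (x + δ • (u + v)) = -(δ • (u+v)) := by abel
      rw [this, norm_neg, norm_smul, Real.norm_eq_abs, abs_of_pos hδpos]
      calc δ * ‖u + v‖ < δ * (‖u + v‖ + 1) := by nlinarith [hδpos, norm_nonneg (u+v)]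
        _ = ε * ((‖u+v‖+1) / (‖u+v‖+1)) := by rw [hδ]; ring
        _ = ε := by rw [div_self (by positivity)]; ring

lemma frontier_Qc {u v : E2} (h : cross2 u v ≠ 0) :
    frontier (Qc u v) = {x | ∃ t : ℝ, 0 ≤ t ∧ x = t • u} ∪ {x | ∃ t : ℝ, 0 ≤ t ∧ x = t • v} := by
  rw [(isClosed_Qc h).frontier_eq, interior_Qc h]
  ext x
  simp only [mem_diff, mem_Qc_iff h, mem_setOf_eq, mem_union, not_and_or, not_lt]
  constructor
  · rintro ⟨⟨hr, hs⟩, hc | hc⟩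
    · have hr0 : rc2 u v x = 0 := le_antisymm hc hr
      right
      refine ⟨sc2 u v x, hs, ?_⟩
      have := rc2_decomp h x
      rw [hr0] at this
      simpa using this
    · have hs0 : sc2 u v x = 0 := le_antisymm hc hs
      left
      refine ⟨rc2 u v x, hr, ?_⟩
      have := rc2_decomp h x
      rw [hs0] at this
      simpa using this
  · rintro (⟨t, ht, rfl⟩ | ⟨t, ht, rfl⟩)
    · refine ⟨⟨?_, ?_⟩, Or.inr ?_⟩ <;>
        simp [rc2_smul h, sc2_smul h, rc2_self_left h, sc2_self_left h, ht]
    · refine ⟨⟨?_, ?_⟩, Or.inl ?_⟩ <;>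
        simp [rc2_smul h, sc2_smul h, rc2_self_right h, sc2_self_right h, ht]

lemma isPolygonalPiece_Qc {u v : E2} (h : cross2 u v ≠ 0) : IsPolygonalPiece (Qc u v) := by
  refine ⟨isClosed_Qc h, ?_, ?_, (closure_interior_Qc h).symm, ?_⟩
  · exact ⟨u + v, add_mem_interior_Qc h⟩
  · refine ⟨⟨u + v, add_mem_interior_Qc h⟩, ?_⟩
    rw [interior_Qc h]
    · have hlin_r : IsLinearMap ℝ (rc2 u v) := by
        constructor
        · intro x y
          have := rc2_comb h 1 1 x y; simpa using this
        · intro c x; exact rc2_smul h c x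
      have hlin_s : IsLinearMap ℝ (sc2 u v) := by
        constructor
        · intro x y
          have := sc2_comb h 1 1 x y; simpa using this
        · intro c x; exact sc2_smul h c x
      have : {x | 0 < rc2 u v x ∧ 0 < sc2 u v x}
          = {x | 0 < rc2 u v x} ∩ {x | 0 < sc2 u v x} := rfl
      rw [this]
      exact ((convex_halfSpace_gt hlin_r 0).inter (convex_halfSpace_gt hlin_s 0)).isPreconnected
  · refine ⟨2, ![{x | ∃ t : ℝ, x = (0:E2) + t • u}, {x | ∃ t : ℝ, x = (0:E2) + t • v}], ?_, ?_⟩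
    · intro i
      fin_cases i
      · exact ⟨0, u, cross2_ne_zero_left h, rfl⟩
      · exact ⟨0, v, cross2_ne_zero_right h, rfl⟩
    · rw [frontier_Qc h]
      rintro x (⟨t, _, rfl⟩ | ⟨t, _, rfl⟩)
      · exact mem_iUnion.mpr ⟨0, ⟨t, by simp⟩⟩
      · exact mem_iUnion.mpr ⟨1, ⟨t, by simp⟩⟩
/-! ### More planar algebra: perpendicular vector -/

lemma dot2_add_right (a x y : E2) : dot2 a (x + y) = dot2 a x + dot2 a y := by
  simp [dot2, Pi.add_apply]; ring

lemma dot2_smul_right (a : E2) (c : ℝ) (x : E2) : dot2 a (c • x) = c * dot2 a x := by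
  simp [dot2, Pi.smul_apply, smul_eq_mul]; ring

lemma dot2_neg_right (a x : E2) : dot2 a (-x) = - dot2 a x := by
  simp [dot2]; ring

lemma ne_zero_component {A : E2} (hA : A ≠ 0) : A 0 ≠ 0 ∨ A 1 ≠ 0 := by
  by_contra hc
  push_neg at hc
  exact hA (funext fun i => by fin_cases i
                               · exact hc.1
                               · exact hc.2)

lemma dot2_self_pos {A : E2} (hA : A ≠ 0) : 0 < dot2 A A := by
  rcases ne_zero_component hA with h | h
  · unfold dot2; nlinarith [mul_self_pos.mpr h, mul_self_nonneg (A 1)]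
  · unfold dot2; nlinarith [mul_self_pos.mpr h, mul_self_nonneg (A 0)]

/-- Rotation of `A` by 90 degrees. -/
def perp2 (A : E2) : E2 := fun i => if i = 0 then -(A 1) else A 0

lemma dot2_perp2 (A : E2) : dot2 A (perp2 A) = 0 := by simp [dot2, perp2]; ring

lemma dot2_perp2_self (A : E2) : dot2 (perp2 A) (perp2 A) = dot2 A A := by
  simp [dot2, perp2]; ring

lemma perp2_ne_zero {A : E2} (hA : A ≠ 0) : perp2 A ≠ 0 := by
  intro h
  apply hA
  have h0 : perp2 A 0 = 0 := by rw [h]; rfl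
  have h1 : perp2 A 1 = 0 := by rw [h]; rfl
  simp only [perp2] at h0 h1
  refine funext fun i => ?_
  fin_cases i
  · simpa using h1
  · simpa using h0

lemma cross2_perp2_right (A x : E2) : cross2 x (perp2 A) = dot2 A x := by
  simp [cross2, dot2, perp2]; ring

lemma cross2_A_right (A x : E2) : cross2 x A = - dot2 (perp2 A) x := by
  simp [cross2, dot2, perp2]; ring

/-- Two vectors with the same dot products against `A` and `perp2 A` agree. -/
lemma eq_of_dot2_eq {A : E2} (hA : A ≠ 0) {x y : E2}
    (h1 : dot2 A x = dot2 A y) (h2 : dot2 (perp2 A) x = dot2 (perp2 A) y) : x = y := by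
  have key : ∀ z : E2, ∀ i : Fin 2, dot2 A A * z i = dot2 A z * A i + dot2 (perp2 A) z * perp2 A i := by
    intro z
    rw [Fin.forall_fin_two]
    constructor <;> (simp [dot2, perp2]; ring)
  have hN := (dot2_self_pos hA).ne'
  apply funext2
  · have := key x 0
    rw [h1, h2, ← key y 0] at this
    exact mul_left_cancel₀ hN this
  · have := key x 1
    rw [h1, h2, ← key y 1] at this
    exact mul_left_cancel₀ hN this

lemma continuous_dot2 (a : E2) : Continuous (dot2 a) := by
  unfold dot2; fun_prop

/-- An open bounded connected nonempty subset of `ℝ` is an open interval. -/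
lemma open_interval_structure {J : Set ℝ} (ho : IsOpen J) (hc : IsConnected J)
    (hne : J.Nonempty) (ha : BddBelow J) (hb : BddAbove J) :
    J = Ioo (sInf J) (sSup J) ∧ sInf J < sSup J := by
  have sub1 : J ⊆ Ioo (sInf J) (sSup J) := by
    intro x hx
    obtain ⟨ε, hε, hball⟩ := Metric.mem_nhds_iff.mp (ho.mem_nhds hx)
    have hl : x - ε/2 ∈ J := by
      apply hball
      rw [Metric.mem_ball, Real.dist_eq]
      have h' : x - ε/2 - x = -(ε/2) := by ring
      rw [h', abs_neg, abs_of_pos (by linarith)]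
      linarith
    have hr : x + ε/2 ∈ J := by
      apply hball
      rw [Metric.mem_ball, Real.dist_eq]
      have h' : x + ε/2 - x = ε/2 := by ring
      rw [h', abs_of_pos (by linarith)]
      linarith
    constructor
    · exact lt_of_le_of_lt (csInf_le ha hl) (by linarith)
    · exact lt_of_lt_of_le (by linarith : x < x + ε/2) (le_csSup hb hr)
  have sub2 : Ioo (sInf J) (sSup J) ⊆ J := by
    rintro x ⟨h1, h2⟩
    obtain ⟨y, hy, hyx⟩ := exists_lt_of_csInf_lt hne h1
    obtain ⟨z, hz, hxz⟩ := exists_lt_of_lt_csSup hne h2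
    exact (hc.isPreconnected.ordConnected).out hy hz ⟨hyx.le, hxz.le⟩
  refine ⟨Subset.antisymm sub1 sub2, ?_⟩
  obtain ⟨x, hx⟩ := hne
  obtain ⟨h1, h2⟩ := sub1 hx
  linarith

lemma dot2_comm (a b : E2) : dot2 a b = dot2 b a := by simp [dot2]; ring
/-! ### The sector structure lemma -/

open Pointwise

lemma sector_structure {P : Set E2} (hP : IsPolygonalPiece P)
    (hcone : IsConeWithApex 0 P) {A : E2}
    (hpos : ∀ x ∈ P, x ≠ (0:E2) → 0 < dot2 A x) :
    ∃ u v : E2, 0 < cross2 u v ∧ P = Qc u v ∧ 0 < dot2 A u ∧ 0 < dot2 A v := by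
  obtain ⟨hclosed, hint_ne, hint_conn, hreg, -⟩ := hP
  have hsm : ∀ t : ℝ, 0 ≤ t → ∀ x ∈ P, t • x ∈ P := by
    intro t ht x hx
    have := hcone x hx t ht
    simpa using this
  -- A is nonzero
  have hA : A ≠ 0 := by
    rintro rfl
    obtain ⟨x₀, hx₀⟩ := hint_ne
    by_cases h0 : x₀ = 0
    · subst h0
      obtain ⟨ε, hε, hball⟩ := Metric.mem_nhds_iff.mp (mem_interior_iff_mem_nhds.mp hx₀)
      set d : E2 := fun _ => 1 with hd
      set c := ε / (2 * (‖d‖ + 1)) with hc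
      have hcpos : 0 < c := by positivity
      have hmem : c • d ∈ P := by
        apply hball
        rw [Metric.mem_ball, dist_eq_norm, sub_zero, norm_smul, Real.norm_eq_abs,
          abs_of_pos hcpos]
        calc c * ‖d‖ < c * (2*(‖d‖ + 1)) := by nlinarith [norm_nonneg d]
          _ = ε := by rw [hc]; field_simp
      have hne' : c • d ≠ 0 := by
        intro h
        have := congrFun h 0
        simp only [Pi.smul_apply, hd, smul_eq_mul, mul_one, Pi.zero_apply] at this
        exact hcpos.ne' this
      have := hpos _ hmem hne'
      simp [dot2] at this
    · have := hpos x₀ (interior_subset hx₀) h0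
      simp [dot2] at this
  set N := dot2 A A with hNdef
  have hN : 0 < N := dot2_self_pos hA
  set e := perp2 A with hedef
  -- 0 is not in the interior
  have h0int : (0:E2) ∉ interior P := by
    intro h0
    obtain ⟨ε, hε, hball⟩ := Metric.mem_nhds_iff.mp (mem_interior_iff_mem_nhds.mp h0)
    set c := ε / (2 * (‖A‖ + 1)) with hc
    have hcpos : 0 < c := by positivity
    have hmem : -(c • A) ∈ P := by
      apply hball
      rw [Metric.mem_ball, dist_eq_norm, sub_zero, norm_neg, norm_smul, Real.norm_eq_abs,
        abs_of_pos hcpos]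
      calc c * ‖A‖ < c * (2*(‖A‖ + 1)) := by nlinarith [norm_nonneg A]
        _ = ε := by rw [hc]; field_simp
    have hne' : -(c • A) ≠ 0 := by
      simp only [neg_ne_zero, smul_ne_zero_iff]
      exact ⟨hcpos.ne', hA⟩
    have := hpos _ hmem hne'
    rw [dot2_neg_right, dot2_smul_right] at this
    nlinarith
  have hintpos : ∀ x ∈ interior P, 0 < dot2 A x := by
    intro x hx
    exact hpos x (interior_subset hx) (fun h => h0int (h ▸ hx))
  -- positive scaling preserves the interior
  have hscal : ∀ t : ℝ, 0 < t → ∀ x ∈ interior P, t • x ∈ interior P := by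
    intro t ht x hx
    have hopen : IsOpen (t • interior P) := isOpen_interior.smul₀ ht.ne'
    have hsub : t • interior P ⊆ P := by
      rintro y ⟨z, hz, rfl⟩
      exact hsm t ht.le z (interior_subset hz)
    exact hopen.subset_interior_iff.mpr hsub (Set.smul_mem_smul_set hx)
  -- the slice parametrization
  set ρ : ℝ → E2 := fun s => A + s • e with hρdef
  have hρcont : Continuous ρ := continuous_const.add (continuous_id.smul continuous_const)
  have dAρ : ∀ s, dot2 A (ρ s) = N := by
    intro s
    rw [hρdef]
    simp only []
    rw [dot2_add_right, dot2_smul_right, hedef, dot2_perp2]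
    ring
  have deρ : ∀ s, dot2 e (ρ s) = s * N := by
    intro s
    rw [hρdef]
    simp only []
    rw [dot2_add_right, dot2_smul_right, hedef, dot2_comm (perp2 A) A, dot2_perp2,
      dot2_perp2_self]
    ring
  set σ : E2 → ℝ := fun x => dot2 e x / dot2 A x with hσdef
  set J : Set ℝ := ρ ⁻¹' interior P with hJdef
  have hρσ : ∀ x : E2, 0 < dot2 A x → ρ (σ x) = (N / dot2 A x) • x := by
    intro x hax
    apply eq_of_dot2_eq hA
    · rw [dAρ, dot2_smul_right]
      field_simp
    · rw [← hedef, deρ, dot2_smul_right, hσdef]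
      simp only []
      field_simp
  have hσJ : ∀ x ∈ interior P, σ x ∈ J := by
    intro x hx
    have hax := hintpos x hx
    rw [hJdef, mem_preimage, hρσ x hax]
    exact hscal _ (by positivity) x hx
  have hJσ : ∀ s, σ (ρ s) = s := by
    intro s
    rw [hσdef]
    simp only []
    rw [deρ, dAρ]
    field_simp
  have hJim : J = σ '' interior P := by
    apply Subset.antisymm
    · intro s hs
      exact ⟨ρ s, hs, hJσ s⟩
    · rintro x ⟨y, hy, rfl⟩
      exact hσJ y hy
  have hJopen : IsOpen J := isOpen_interior.preimage hρcont
  have hJconn : IsConnected J := by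
    rw [hJim]
    apply hint_conn.image
    apply ContinuousOn.div
    · exact (continuous_dot2 e).continuousOn
    · exact (continuous_dot2 A).continuousOn
    · exact fun x hx => (hintpos x hx).ne'
  have hJne : J.Nonempty := by
    rw [hJim]
    exact hint_ne.image σ
  have hbdda : BddAbove J := by
    by_contra hbd
    have he_mem : e ∈ P := by
      rw [← hclosed.closure_eq, Metric.mem_closure_iff]
      intro ε hε
      obtain ⟨s, hsJ, hs⟩ := not_bddAbove_iff.mp hbd (max (‖A‖/ε) 1)
      have hs1 : 1 < s := lt_of_le_of_lt (le_max_right _ _) hs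
      have hs0 : 0 < s := by linarith
      refine ⟨s⁻¹ • ρ s, hsm s⁻¹ (by positivity) _ (interior_subset hsJ), ?_⟩
      have hps : s⁻¹ • ρ s = s⁻¹ • A + e := by
        rw [hρdef]
        simp only []
        rw [smul_add, smul_smul, inv_mul_cancel₀ hs0.ne', one_smul]
      rw [hps, dist_eq_norm]
      have harr : e - (s⁻¹ • A + e) = -(s⁻¹ • A) := by abel
      rw [harr, norm_neg, norm_smul, Real.norm_eq_abs, abs_of_pos (by positivity)]
      rw [inv_mul_eq_div, div_lt_iff₀ hs0]
      have h2 : ‖A‖ / ε < s := lt_of_le_of_lt (le_max_left _ _) hs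
      rw [div_lt_iff₀ hε] at h2
      nlinarith
    have := hpos e he_mem (hedef ▸ perp2_ne_zero hA)
    rw [hedef, dot2_perp2] at this
    exact lt_irrefl 0 this
  have hbddb : BddBelow J := by
    by_contra hbd
    have he_mem : -e ∈ P := by
      rw [← hclosed.closure_eq, Metric.mem_closure_iff]
      intro ε hε
      obtain ⟨s, hsJ, hs⟩ := not_bddBelow_iff.mp hbd (-(max (‖A‖/ε) 1))
      have hs1 : s < -1 := lt_of_lt_of_le hs (neg_le_neg (le_max_right _ _))
      have hs0 : s < 0 := by linarith
      have hnspos : 0 < -s := by linarith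
      refine ⟨(-s)⁻¹ • ρ s, hsm (-s)⁻¹ (by positivity) _ (interior_subset hsJ), ?_⟩
      have hps : (-s)⁻¹ • ρ s = (-s)⁻¹ • A - e := by
        rw [hρdef]
        simp only []
        rw [smul_add, smul_smul]
        have : (-s)⁻¹ * s = -1 := by rw [inv_neg, neg_mul, inv_mul_cancel₀ hs0.ne]
        rw [this, neg_one_smul, sub_eq_add_neg]
      rw [hps, dist_eq_norm]
      have harr : -e - ((-s)⁻¹ • A - e) = -((-s)⁻¹ • A) := by abel
      rw [harr, norm_neg, norm_smul, Real.norm_eq_abs, abs_of_pos (by positivity)]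
      rw [inv_mul_eq_div, div_lt_iff₀ hnspos]
      have h2 : ‖A‖ / ε < -s := lt_of_le_of_lt (le_max_left _ _) (by linarith [hs, neg_le_neg (le_max_left (‖A‖/ε) 1)] )
      rw [div_lt_iff₀ hε] at h2
      nlinarith
    have := hpos (-e) he_mem (neg_ne_zero.mpr (hedef ▸ perp2_ne_zero hA))
    rw [dot2_neg_right, hedef, dot2_perp2] at this
    nlinarith
  obtain ⟨hJI, hαβ⟩ := open_interval_structure hJopen hJconn hJne hbddb hbdda
  set α := sInf J with hα
  set β := sSup J with hβ
  set u := ρ α with hu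
  set v := ρ β with hv
  have cAe : cross2 A e = N := by rw [hedef, cross2_perp2_right]
  have cuv : cross2 u v = (β - α) * N := by
    rw [hu, hv, hρdef]
    simp only []
    simp only [cross2_add_left, cross2_add_right, cross2_smul_left, cross2_smul_right,
      cross2_self]
    rw [cross2_anticomm e A, cAe]
    ring
  have hcuv_pos : 0 < cross2 u v := by
    rw [cuv]
    exact mul_pos (by linarith) hN
  -- coordinate formulas
  have hxv : ∀ x, cross2 x v = β * dot2 A x - dot2 e x := by
    intro x
    rw [hv, hρdef]
    simp only []
    rw [cross2_add_right, cross2_smul_right, cross2_A_right A x, hedef, cross2_perp2_right]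
    ring
  have hux : ∀ x, cross2 u x = dot2 e x - α * dot2 A x := by
    intro x
    rw [hu, hρdef]
    simp only []
    rw [cross2_add_left, cross2_smul_left, cross2_anticomm A x, cross2_A_right A x,
      cross2_anticomm e x, hedef, cross2_perp2_right]
    ring
  -- the interiors agree
  have hU_eq : interior P = interior (Qc u v) := by
    rw [interior_Qc hcuv_pos.ne']
    ext x
    constructor
    · intro hx
      have hax := hintpos x hx
      have hσx := hσJ x hx
      rw [hJI] at hσx
      obtain ⟨h1, h2⟩ := hσx
      rw [hσdef] at h1 h2
      simp only [] at h1 h2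
      rw [div_lt_iff₀ hax] at h2
      rw [lt_div_iff₀ hax] at h1
      constructor
      · rw [rc2, hxv]
        apply div_pos (by linarith) hcuv_pos
      · rw [sc2, hux]
        apply div_pos (by linarith) hcuv_pos
    · rintro ⟨h1, h2⟩
      rw [rc2, hxv] at h1
      rw [sc2, hux] at h2
      have hnum1 : 0 < β * dot2 A x - dot2 e x := by
        have := mul_pos h1 hcuv_pos
        rwa [div_mul_cancel₀ _ hcuv_pos.ne'] at this
      have hnum2 : 0 < dot2 e x - α * dot2 A x := by
        have := mul_pos h2 hcuv_pos
        rwa [div_mul_cancel₀ _ hcuv_pos.ne'] at this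
      have hax : 0 < dot2 A x := by nlinarith
      have hσmem : σ x ∈ J := by
        rw [hJI, hσdef]
        simp only []
        constructor
        · rw [lt_div_iff₀ hax]; linarith
        · rw [div_lt_iff₀ hax]; linarith
      have hρmem : ρ (σ x) ∈ interior P := hσmem
      have hxeq : x = (dot2 A x / N) • ρ (σ x) := by
        rw [hρσ x hax, smul_smul]
        have : dot2 A x / N * (N / dot2 A x) = 1 := by field_simp
        rw [this, one_smul]
      rw [hxeq]
      exact hscal _ (by positivity) _ hρmem
  refine ⟨u, v, hcuv_pos, ?_, ?_, ?_⟩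
  · rw [hreg, hU_eq, closure_interior_Qc hcuv_pos.ne']
  · rw [hu, dAρ]; exact hN
  · rw [hv, dAρ]; exact hN
/-! ### Orientation helpers -/

lemma dot2_comb (a : E2) (r s : ℝ) (x y : E2) :
    dot2 a (r • x + s • y) = r * dot2 a x + s * dot2 a y := by
  rw [dot2_add_right, dot2_smul_right, dot2_smul_right]

lemma frontier_subset_self {s : Set E2} (h : IsClosed s) : frontier s ⊆ s := by
  rw [h.frontier_eq]; exact diff_subset

lemma not_mem_interior_of_mem_frontier {s : Set E2} {x : E2} (h : x ∈ frontier s) :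
    x ∉ interior s := fun h' => h.2 h'

/-- Two cones on the same side of the ray through `w` have overlapping interiors,
contradicting admissibility. -/
lemma no_overlap {P₁ P₂ : Set E2} {u w v : E2}
    (h1 : cross2 u w ≠ 0) (h2 : cross2 v w ≠ 0)
    (hsame : 0 < cross2 w u * cross2 w v)
    (hQ1 : P₁ = Qc u w) (hQ2 : P₂ = Qc v w)
    (hfr : P₁ ∩ P₂ = frontier P₁ ∩ frontier P₂) : False := by
  set M := |cross2 u v / cross2 u w| + 1 with hM
  set z := v + M • w with hz
  have hcz : cross2 z w = cross2 v w := by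
    rw [hz, cross2_add_left, cross2_smul_left, cross2_self]; ring
  have hcuz : cross2 u z = cross2 u v + M * cross2 u w := by
    rw [hz, cross2_add_right, cross2_smul_right]
  have hz1 : z ∈ interior P₁ := by
    rw [hQ1, interior_Qc h1]
    constructor
    · rw [rc2, hcz]
      rw [cross2_anticomm v w, cross2_anticomm u w, neg_div_neg_eq]
      rcases mul_pos_iff.mp hsame with ⟨ha, hb⟩ | ⟨ha, hb⟩
      · exact div_pos hb ha
      · exact div_pos_of_neg_of_neg hb ha
    · rw [sc2, hcuz, add_div, mul_div_assoc, div_self h1, mul_one]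
      have := neg_abs_le (cross2 u v / cross2 u w)
      rw [hM]
      linarith [abs_nonneg (cross2 u v / cross2 u w)]
  have hz2 : z ∈ interior P₂ := by
    rw [hQ2, interior_Qc h2]
    constructor
    · rw [rc2, hcz, div_self h2]; norm_num
    · rw [sc2, hz, cross2_add_right, cross2_smul_right, cross2_self, zero_add,
        mul_div_assoc, div_self h2, mul_one, hM]
      positivity
  have hzz : z ∈ P₁ ∩ P₂ := ⟨interior_subset hz1, interior_subset hz2⟩
  rw [hfr] at hzz
  exact not_mem_interior_of_mem_frontier hzz.1 hz1

/-- Normalize a sector so that the given frontier ray direction is a generator. -/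
lemma orient {P : Set E2} {c d w A : E2}
    (hcd : 0 < cross2 c d) (hP : P = Qc c d)
    (hAc : 0 < dot2 A c) (hAd : 0 < dot2 A d)
    (hw : w ∈ frontier P) (hw0 : w ≠ 0) :
    (∃ u, P = Qc u w ∧ 0 < cross2 u w ∧ 0 < dot2 A u) ∨
    (∃ u, P = Qc w u ∧ 0 < cross2 w u ∧ 0 < dot2 A u) := by
  rw [hP, frontier_Qc hcd.ne'] at hw
  rcases hw with ⟨t, ht, rfl⟩ | ⟨t, ht, rfl⟩
  · have ht0 : 0 < t := by
      rcases ht.lt_or_eq with h | h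
      · exact h
      · exact absurd (by rw [← h, zero_smul]) hw0
    right
    refine ⟨d, ?_, ?_, hAd⟩
    · rw [hP, ← Qc_smul_left ht0 c d, Qc_comm]
    · rw [cross2_smul_left]
      exact mul_pos ht0 hcd
  · have ht0 : 0 < t := by
      rcases ht.lt_or_eq with h | h
      · exact h
      · exact absurd (by rw [← h, zero_smul]) hw0
    left
    refine ⟨c, ?_, ?_, hAc⟩
    · rw [hP, ← Qc_smul_right ht0 c d]
    · rw [cross2_smul_right]
      exact mul_pos ht0 hcd
/-! ### The key construction -/

set_option maxHeartbeats 2000000 in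
lemma key_lemma (p : ℕ) (hp : 3 ≤ p) (f : E2 → ℝ) (Ps : Finset (Set E2)) (hcard : Ps.card ≤ p)
    (hcont : Continuous f) (hadm : IsAdmissible f Ps)
    (hcone : ∀ P ∈ Ps, IsConeWithApex 0 P)
    (hlin : ∀ P ∈ Ps, ∃ g : E2 → ℝ, IsLinearFn g ∧ EqOn f g P)
    (P₁ P₂ : Set E2) (hP₁ : P₁ ∈ Ps) (hP₂ : P₂ ∈ Ps) (hne : P₁ ≠ P₂)
    (A u w v : E2)
    (hQ1 : P₁ = Qc u w) (hQ2 : P₂ = Qc w v)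
    (cuw : 0 < cross2 u w) (cwv : 0 < cross2 w v)
    (hAu : 0 < dot2 A u) (hAw : 0 < dot2 A w) (hAv : 0 < dot2 A v) :
    ∃ f' : E2 → ℝ, IsCPL 3 f' ∧ IsCPL (p - 1) (fun x => f x - f' x) := by
  classical
  obtain ⟨hpoly, huniv, hpair, -⟩ := hadm
  -- u and v are positively oriented
  have cuv : 0 < cross2 u v := by
    have hne' : cross2 u v ≠ 0 := by
      intro h
      obtain ⟨k, rfl⟩ := exists_smul_of_cross2_eq_zero (cross2_ne_zero_left cuw.ne') h
      rw [cross2_smul_right, cross2_anticomm w u] at cwv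
      rw [dot2_smul_right] at hAv
      nlinarith
    rcases hne'.lt_or_gt with h | h
    · exfalso
      have hdec := cross2_decomp hne' w
      have hα : cross2 w v / cross2 u v < 0 := div_neg_of_pos_of_neg cwv h
      have hβ : cross2 u w / cross2 u v < 0 := div_neg_of_pos_of_neg cuw h
      have := dot2_comb A (cross2 w v / cross2 u v) (cross2 u w / cross2 u v) u v
      rw [← hdec] at this
      nlinarith
    · exact h
  -- decomposition of w
  have hwdec : w = (cross2 w v / cross2 u v) • u + (cross2 u w / cross2 u v) • v :=
    cross2_decomp cuv.ne' w
  have hαpos : 0 < cross2 w v / cross2 u v := div_pos cwv cuv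
  have hβpos : 0 < cross2 u w / cross2 u v := div_pos cuw cuv
  -- the union is the sector on u, v
  have hS : Qc u v = P₁ ∪ P₂ := by
    apply Subset.antisymm
    · rintro x ⟨r, s, hr, hs, rfl⟩
      rcases le_or_gt (cross2 w (r • u + s • v)) 0 with hcase | hcase
      · left
        rw [hQ1, mem_Qc_iff cuw.ne']
        constructor
        · rw [rc2]
          apply div_nonneg _ cuw.le
          rw [cross2_anticomm]
          linarith
        · rw [sc2]
          apply div_nonneg _ cuw.le
          rw [cross2_comb_right, cross2_self]
          nlinarith [cuv]
      · right
        rw [hQ2, mem_Qc_iff cwv.ne']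
        constructor
        · rw [rc2]
          apply div_nonneg _ cwv.le
          rw [cross2_comb_left, cross2_self]
          nlinarith [cuv]
        · exact div_nonneg hcase.le cwv.le
    · rintro x (hx | hx)
      · rw [hQ1] at hx
        obtain ⟨r, s, hr, hs, rfl⟩ := hx
        have : r • u + s • w
            = (r + s * (cross2 w v / cross2 u v)) • u + (s * (cross2 u w / cross2 u v)) • v := by
          conv_lhs => rw [hwdec]
          module
        rw [this]
        exact comb_mem_Qc (by nlinarith) (by nlinarith)
      · rw [hQ2] at hx
        obtain ⟨r, s, hr, hs, rfl⟩ := hx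
        have : r • w + s • v
            = (r * (cross2 w v / cross2 u v)) • u + (r * (cross2 u w / cross2 u v) + s) • v := by
          conv_lhs => rw [hwdec]
          module
        rw [this]
        exact comb_mem_Qc (by nlinarith) (by nlinarith)
  have hP₁S : P₁ ⊆ Qc u v := by rw [hS]; exact subset_union_left
  have hP₂S : P₂ ⊆ Qc u v := by rw [hS]; exact subset_union_right
  -- linear components
  obtain ⟨g₁, hg₁lin, hg₁⟩ := hlin P₁ hP₁
  obtain ⟨a₁, ha₁⟩ := (isLinearFn_iff g₁).mp hg₁lin
  obtain ⟨g₂, hg₂lin, hg₂⟩ := hlin P₂ hP₂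
  obtain ⟨a₂, ha₂⟩ := (isLinearFn_iff g₂).mp hg₂lin
  have hf₁ : ∀ x ∈ P₁, f x = dot2 a₁ x := fun x hx => (hg₁ hx).trans (ha₁ x)
  have hf₂ : ∀ x ∈ P₂, f x = dot2 a₂ x := fun x hx => (hg₂ hx).trans (ha₂ x)
  -- the interpolating linear function
  set G : E2 → ℝ :=
    fun x => (dot2 a₁ u * cross2 x v + dot2 a₂ v * cross2 u x) / cross2 u v with hGdef
  have hGu : G u = dot2 a₁ u := by
    rw [hGdef]
    simp only [cross2_self, mul_zero, add_zero]
    field_simp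
  have hGv : G v = dot2 a₂ v := by
    rw [hGdef]
    simp only [cross2_self, mul_zero, zero_add]
    field_simp
  have hGform : ∀ x, G x = ((dot2 a₁ u * v 1 - dot2 a₂ v * u 1)/cross2 u v) * x 0
      + ((dot2 a₂ v * u 0 - dot2 a₁ u * v 0)/cross2 u v) * x 1 := by
    intro x
    rw [hGdef]
    simp only [cross2]
    ring
  have hGlin : IsLinearFn G := by
    obtain ⟨aG, haG⟩ := isLinearFn_of ((dot2 a₁ u * v 1 - dot2 a₂ v * u 1)/cross2 u v)
      ((dot2 a₂ v * u 0 - dot2 a₁ u * v 0)/cross2 u v)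
    exact ⟨aG, fun x => (hGform x).trans (haG x)⟩
  have hGsmul : ∀ (t : ℝ) (x : E2), G (t • x) = t * G x := by
    intro t x
    rw [hGdef]
    simp only [cross2_smul_left, cross2_smul_right]
    ring
  have hGcont : Continuous G := by
    have : G = fun x => ((dot2 a₁ u * v 1 - dot2 a₂ v * u 1)/cross2 u v) * x 0
      + ((dot2 a₂ v * u 0 - dot2 a₁ u * v 0)/cross2 u v) * x 1 := funext hGform
    rw [this]
    fun_prop
  -- f - G vanishes on the frontier of the sector
  have vanish : ∀ x ∈ frontier (Qc u v), f x - G x = 0 := by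
    rw [frontier_Qc cuv.ne']
    rintro x (⟨t, ht, rfl⟩ | ⟨t, ht, rfl⟩)
    · have hmem : t • u ∈ P₁ := by
        rw [hQ1]
        have : t • u = t • u + (0:ℝ) • w := by module
        rw [this]
        exact comb_mem_Qc ht (le_refl 0)
      rw [hf₁ _ hmem, dot2_smul_right, hGsmul, hGu]
      ring
    · have hmem : t • v ∈ P₂ := by
        rw [hQ2]
        have : t • v = (0:ℝ) • w + t • v := by module
        rw [this]
        exact comb_mem_Qc (le_refl 0) ht
      rw [hf₂ _ hmem, dot2_smul_right, hGsmul, hGv]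
      ring
  -- the correction function
  set f' : E2 → ℝ := fun x => if x ∈ Qc u v then f x - G x else 0 with hf'def
  have hf'cont : Continuous f' := by
    apply Continuous.if _ (hcont.sub hGcont) continuous_const
    intro x hx
    rw [setOf_mem_eq] at hx
    exact vanish x hx
  -- the complementary piece
  set C : Set E2 := (interior (Qc u v))ᶜ with hCdef
  have hCclosed : IsClosed C := isOpen_interior.isClosed_compl
  have hmemC : ∀ x, x ∈ C ↔ ¬(0 < rc2 u v x ∧ 0 < sc2 u v x) := by
    intro x
    rw [hCdef, mem_compl_iff, interior_Qc cuv.ne', mem_setOf_eq]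
  have hmemC' : ∀ x, x ∈ C ↔ (rc2 u v x ≤ 0 ∨ sc2 u v x ≤ 0) := by
    intro x
    rw [hmemC x, not_and_or, not_lt, not_lt]
  have hintC : interior C = {x | rc2 u v x < 0 ∨ sc2 u v x < 0} := by
    apply Subset.antisymm
    · intro x hx
      by_contra hcon
      rw [mem_setOf_eq, not_or, not_lt, not_lt] at hcon
      have hxQ : x ∈ Qc u v := (mem_Qc_iff cuv.ne' x).mpr ⟨hcon.1, hcon.2⟩
      rw [← closure_interior_Qc cuv.ne'] at hxQ
      obtain ⟨y, hy1, hy2⟩ := _root_.mem_closure_iff.mp hxQ (interior C) isOpen_interior hx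
      exact (interior_subset hy1 : y ∈ C) hy2
    · have hopen : IsOpen {x | rc2 u v x < 0 ∨ sc2 u v x < 0} := by
        have : {x | rc2 u v x < 0 ∨ sc2 u v x < 0}
            = (rc2 u v) ⁻¹' (Iio 0) ∪ (sc2 u v) ⁻¹' (Iio 0) := rfl
        rw [this]
        exact (isOpen_Iio.preimage (continuous_rc2 u v)).union
          (isOpen_Iio.preimage (continuous_sc2 u v))
      apply hopen.subset_interior_iff.mpr
      intro x hx
      rw [hmemC' x]
      rcases hx with h | h
      · exact Or.inl h.le
      · exact Or.inr h.le
  have hCreg : closure (interior C) = C := by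
    apply Subset.antisymm
    · exact closure_minimal interior_subset hCclosed
    · intro x hx
      rw [hmemC' x] at hx
      rw [Metric.mem_closure_iff]
      intro ε hε
      rcases hx with h | h
      · set δ := ε / (‖u‖ + 1) with hδ
        have hδpos : 0 < δ := by positivity
        refine ⟨x - δ • u, ?_, ?_⟩
        · rw [hintC, mem_setOf_eq]
          left
          rw [rc2_sub_smul cuv.ne', rc2_self_left cuv.ne']
          linarith
        · rw [dist_eq_norm]
          have harr : x - (x - δ • u) = δ • u := by abel
          rw [harr, norm_smul, Real.norm_eq_abs, abs_of_pos hδpos]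
          calc δ * ‖u‖ < δ * (‖u‖ + 1) := by nlinarith [norm_nonneg u]
            _ = ε := by rw [hδ]; field_simp
      · set δ := ε / (‖v‖ + 1) with hδ
        have hδpos : 0 < δ := by positivity
        refine ⟨x - δ • v, ?_, ?_⟩
        · rw [hintC, mem_setOf_eq]
          right
          rw [sc2_sub_smul cuv.ne', sc2_self_right cuv.ne']
          linarith
        · rw [dist_eq_norm]
          have harr : x - (x - δ • v) = δ • v := by abel
          rw [harr, norm_smul, Real.norm_eq_abs, abs_of_pos hδpos]
          calc δ * ‖v‖ < δ * (‖v‖ + 1) := by nlinarith [norm_nonneg v]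
            _ = ε := by rw [hδ]; field_simp
  have hneguv : -(u + v) ∈ interior C := by
    rw [hintC, mem_setOf_eq]
    left
    have : -(u+v) = (-1 : ℝ) • (u+v) := by module
    rw [this, rc2_smul cuv.ne', rc2_add_self cuv.ne']
    norm_num
  have hCconn : IsConnected (interior C) := by
    rw [hintC]
    have hlin_r : IsLinearMap ℝ (rc2 u v) := by
      constructor
      · intro x y
        have := rc2_comb cuv.ne' 1 1 x y; simpa using this
      · intro c x; exact rc2_smul cuv.ne' c x
    have hlin_s : IsLinearMap ℝ (sc2 u v) := by
      constructor
      · intro x y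
        have := sc2_comb cuv.ne' 1 1 x y; simpa using this
      · intro c x; exact sc2_smul cuv.ne' c x
    have h1 : IsConnected {x | rc2 u v x < 0} := by
      refine ⟨⟨-(u+v), ?_⟩, (convex_halfSpace_lt hlin_r 0).isPreconnected⟩
      have : -(u+v) = (-1 : ℝ) • (u+v) := by module
      rw [mem_setOf_eq, this, rc2_smul cuv.ne', rc2_add_self cuv.ne']
      norm_num
    have h2 : IsConnected {x | sc2 u v x < 0} := by
      refine ⟨⟨-(u+v), ?_⟩, (convex_halfSpace_lt hlin_s 0).isPreconnected⟩
      have : -(u+v) = (-1 : ℝ) • (u+v) := by module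
      rw [mem_setOf_eq, this, sc2_smul cuv.ne', sc2_add_self cuv.ne']
      norm_num
    have hinter : ({x | rc2 u v x < 0} ∩ {x | sc2 u v x < 0}).Nonempty := by
      refine ⟨-(u+v), ?_, ?_⟩
      · have : -(u+v) = (-1 : ℝ) • (u+v) := by module
        rw [mem_setOf_eq, this, rc2_smul cuv.ne', rc2_add_self cuv.ne']
        norm_num
      · have : -(u+v) = (-1 : ℝ) • (u+v) := by module
        rw [mem_setOf_eq, this, sc2_smul cuv.ne', sc2_add_self cuv.ne']
        norm_num
    exact IsConnected.union hinter h1 h2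
  have hCcone : IsConeWithApex 0 C := by
    intro x hx t ht
    have hgoal : t • x ∈ C := by
      rw [hmemC' (t • x), rc2_smul cuv.ne', sc2_smul cuv.ne']
      rcases ht.lt_or_eq with h | h
      · rw [hmemC' x] at hx
        rcases hx with h' | h'
        · exact Or.inl (mul_nonpos_of_nonneg_of_nonpos h.le h')
        · exact Or.inr (mul_nonpos_of_nonneg_of_nonpos h.le h')
      · rw [← h]
        norm_num
    simpa using hgoal
  have hCpoly : IsPolygonalPiece C := by
    refine ⟨hCclosed, ⟨-(u+v), hneguv⟩, hCconn, hCreg.symm, 2,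
      ![{x | ∃ t : ℝ, x = (0:E2) + t • u}, {x | ∃ t : ℝ, x = (0:E2) + t • v}], ?_, ?_⟩
    · intro i
      fin_cases i
      · exact ⟨0, u, cross2_ne_zero_left cuv.ne', rfl⟩
      · exact ⟨0, v, cross2_ne_zero_right cuv.ne', rfl⟩
    · have h1 : frontier C = frontier (interior (Qc u v)) := by
        rw [hCdef, frontier_compl]
      rw [h1]
      intro x hx
      have hx' : x ∈ frontier (Qc u v) := frontier_interior_subset hx
      rw [frontier_Qc cuv.ne'] at hx'
      rcases hx' with ⟨t, _, rfl⟩ | ⟨t, _, rfl⟩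
      · exact mem_iUnion.mpr ⟨0, ⟨t, by simp⟩⟩
      · exact mem_iUnion.mpr ⟨1, ⟨t, by simp⟩⟩
  -- values of f' on the pieces
  have hEq1 : EqOn f' (fun x => dot2 a₁ x - G x) P₁ := by
    intro x hx
    rw [hf'def]
    simp only [if_pos (hP₁S hx)]
    rw [hf₁ x hx]
  have hEq2 : EqOn f' (fun x => dot2 a₂ x - G x) P₂ := by
    intro x hx
    rw [hf'def]
    simp only [if_pos (hP₂S hx)]
    rw [hf₂ x hx]
  have hEqC : EqOn f' (fun _ => 0) C := by
    intro x hx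
    rw [hf'def]
    by_cases hxs : x ∈ Qc u v
    · simp only [if_pos hxs]
      apply vanish
      rw [(isClosed_Qc cuv.ne').frontier_eq]
      exact ⟨hxs, hx⟩
    · simp only [if_neg hxs]
  have hlin1 : IsLinearFn (fun x => dot2 a₁ x - G x) := by
    obtain ⟨aG, haG⟩ := hGlin
    refine ⟨a₁ - aG, fun x => ?_⟩
    rw [sub_dotProduct, dotProduct_eq_dot2, ← haG x]
  have hlin2 : IsLinearFn (fun x => dot2 a₂ x - G x) := by
    obtain ⟨aG, haG⟩ := hGlin
    refine ⟨a₂ - aG, fun x => ?_⟩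
    rw [sub_dotProduct, dotProduct_eq_dot2, ← haG x]
  have hlin0 : IsLinearFn (fun _ : E2 => (0:ℝ)) := ⟨0, fun x => by rw [zero_dotProduct]⟩
  -- pairwise frontier conditions for the new pieces
  have h1C : P₁ ∩ C = frontier P₁ ∩ frontier C := by
    apply Subset.antisymm
    · rintro x ⟨hx1, hxC⟩
      have hxS : x ∈ Qc u v := hP₁S hx1
      have h1 := (mem_Qc_iff cuv.ne' x).mp hxS
      have hdisj := (hmemC' x).mp hxC
      constructor
      · rcases hdisj with h | h
        · have hr0 : rc2 u v x = 0 := le_antisymm h h1.1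
          have hxv : x = sc2 u v x • v := by
            have hd := rc2_decomp cuv.ne' x
            rw [hr0, zero_smul, zero_add] at hd
            exact hd
          have hx1' := (mem_Qc_iff cuw.ne' x).mp (hQ1 ▸ hx1)
          have hcxw : cross2 x w = -(sc2 u v x * cross2 w v) := by
            conv_lhs => rw [hxv]
            rw [cross2_smul_left, cross2_anticomm v w]
            ring
          have hge : 0 ≤ cross2 x w := by
            have h1'' := hx1'.1
            rw [rc2] at h1''
            have := mul_nonneg h1'' cuw.le
            rwa [div_mul_cancel₀ _ cuw.ne'] at this
          have hs0 : sc2 u v x = 0 := by nlinarith [h1.2]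
          have hx0 : x = 0 := by rw [hxv, hs0, zero_smul]
          rw [hx0, hQ1, frontier_Qc cuw.ne']
          exact Or.inl ⟨0, le_refl 0, by simp⟩
        · have hs0 : sc2 u v x = 0 := le_antisymm h h1.2
          have hxu : x = rc2 u v x • u := by
            have hd := rc2_decomp cuv.ne' x
            rw [hs0, zero_smul, add_zero] at hd
            exact hd
          rw [hQ1, frontier_Qc cuw.ne']
          exact Or.inl ⟨rc2 u v x, h1.1, hxu⟩
      · rw [hCclosed.frontier_eq]
        refine ⟨hxC, ?_⟩
        rw [hintC, mem_setOf_eq, not_or, not_lt, not_lt]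
        exact h1
    · rintro x ⟨hx1, hx2⟩
      exact ⟨frontier_subset_self (hQ1 ▸ isClosed_Qc cuw.ne') hx1,
        frontier_subset_self hCclosed hx2⟩
  have h2C : P₂ ∩ C = frontier P₂ ∩ frontier C := by
    apply Subset.antisymm
    · rintro x ⟨hx2, hxC⟩
      have hxS : x ∈ Qc u v := hP₂S hx2
      have h1 := (mem_Qc_iff cuv.ne' x).mp hxS
      have hdisj := (hmemC' x).mp hxC
      constructor
      · rcases hdisj with h | h
        · have hr0 : rc2 u v x = 0 := le_antisymm h h1.1
          have hxv : x = sc2 u v x • v := by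
            have hd := rc2_decomp cuv.ne' x
            rw [hr0, zero_smul, zero_add] at hd
            exact hd
          rw [hQ2, frontier_Qc cwv.ne']
          exact Or.inr ⟨sc2 u v x, h1.2, hxv⟩
        · have hs0 : sc2 u v x = 0 := le_antisymm h h1.2
          have hxu : x = rc2 u v x • u := by
            have hd := rc2_decomp cuv.ne' x
            rw [hs0, zero_smul, add_zero] at hd
            exact hd
          have hx2' := (mem_Qc_iff cwv.ne' x).mp (hQ2 ▸ hx2)
          have hcwx : cross2 w x = -(rc2 u v x * cross2 u w) := by
            conv_lhs => rw [hxu]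
            rw [cross2_smul_right, cross2_anticomm w u]
            ring
          have hge : 0 ≤ cross2 w x := by
            have h2'' := hx2'.2
            rw [sc2] at h2''
            have := mul_nonneg h2'' cwv.le
            rwa [div_mul_cancel₀ _ cwv.ne'] at this
          have hr00 : rc2 u v x = 0 := by nlinarith [h1.1]
          have hx0 : x = 0 := by rw [hxu, hr00, zero_smul]
          rw [hx0, hQ2, frontier_Qc cwv.ne']
          exact Or.inl ⟨0, le_refl 0, by simp⟩
      · rw [hCclosed.frontier_eq]
        refine ⟨hxC, ?_⟩
        rw [hintC, mem_setOf_eq, not_or, not_lt, not_lt]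
        exact h1
    · rintro x ⟨hx1, hx2⟩
      exact ⟨frontier_subset_self (hQ2 ▸ isClosed_Qc cwv.ne') hx1,
        frontier_subset_self hCclosed hx2⟩
  -- intersection of the sector with old pieces
  have hSQ : ∀ Q ∈ Ps, Q ≠ P₁ → Q ≠ P₂ →
      Qc u v ∩ Q = frontier (Qc u v) ∩ frontier Q := by
    intro Q hQ hQ1' hQ2'
    have e1 : P₁ ∩ Q = frontier P₁ ∩ frontier Q := hpair P₁ hP₁ Q hQ (Ne.symm hQ1')
    have e2 : P₂ ∩ Q = frontier P₂ ∩ frontier Q := hpair P₂ hP₂ Q hQ (Ne.symm hQ2')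
    apply Subset.antisymm
    · rintro x ⟨hxS, hxQ⟩
      have hfq : x ∈ frontier Q := by
        have hxS' := hxS
        rw [hS] at hxS'
        rcases hxS' with h | h
        · have hxPQ : x ∈ P₁ ∩ Q := ⟨h, hxQ⟩
          rw [e1] at hxPQ
          exact hxPQ.2
        · have hxPQ : x ∈ P₂ ∩ Q := ⟨h, hxQ⟩
          rw [e2] at hxPQ
          exact hxPQ.2
      refine ⟨?_, hfq⟩
      rw [(isClosed_Qc cuv.ne').frontier_eq]
      refine ⟨hxS, ?_⟩
      intro hint'
      have hQreg : Q = closure (interior Q) := (hpoly Q hQ).2.2.2.1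
      have hxcl : x ∈ closure (interior Q) := by rw [← hQreg]; exact hxQ
      obtain ⟨y, hyS, hyQ⟩ :=
        _root_.mem_closure_iff.mp hxcl (interior (Qc u v)) isOpen_interior hint'
      have hySQ : y ∈ P₁ ∪ P₂ := by rw [← hS]; exact interior_subset hyS
      rcases hySQ with h | h
      · have hyPQ : y ∈ P₁ ∩ Q := ⟨h, interior_subset hyQ⟩
        rw [e1] at hyPQ
        exact not_mem_interior_of_mem_frontier hyPQ.2 hyQ
      · have hyPQ : y ∈ P₂ ∩ Q := ⟨h, interior_subset hyQ⟩
        rw [e2] at hyPQ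
        exact not_mem_interior_of_mem_frontier hyPQ.2 hyQ
    · rintro x ⟨hx1, hx2⟩
      exact ⟨frontier_subset_self (isClosed_Qc cuv.ne') hx1,
        frontier_subset_self ((hpoly Q hQ).1) hx2⟩
  -- f' vanishes on old pieces
  have hvanQ : ∀ Q ∈ Ps, Q ≠ P₁ → Q ≠ P₂ → ∀ x ∈ Q, f' x = 0 := by
    intro Q hQ hQ1' hQ2' x hx
    rw [hf'def]
    by_cases hxs : x ∈ Qc u v
    · simp only [if_pos hxs]
      apply vanish
      have hxSQ : x ∈ Qc u v ∩ Q := ⟨hxs, hx⟩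
      rw [hSQ Q hQ hQ1' hQ2'] at hxSQ
      exact hxSQ.1
    · simp only [if_neg hxs]
  -- ### Assembly
  have hmemF : ∀ X ∈ ({P₁, P₂, C} : Finset (Set E2)), X = P₁ ∨ X = P₂ ∨ X = C := by
    intro X hX
    simpa using hX
  have hIsCPL3 : IsCPL 3 f' := by
    refine ⟨hf'cont, {P₁, P₂, C}, ?_, ⟨?_, ?_, ?_, ?_⟩, ?_, ?_⟩
    · apply le_trans (Finset.card_insert_le _ _)
      have h2 : ({P₂, C} : Finset (Set E2)).card ≤ 2 := by
        apply le_trans (Finset.card_insert_le _ _)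
        simp
      omega
    · intro X hX
      rcases hmemF X hX with h | h | h <;> rw [h]
      · exact hpoly P₁ hP₁
      · exact hpoly P₂ hP₂
      · exact hCpoly
    · apply eq_univ_of_forall
      intro x
      by_cases hxs : x ∈ Qc u v
      · rw [hS] at hxs
        rcases hxs with h | h
        · exact mem_iUnion₂.mpr ⟨P₁, by simp, h⟩
        · exact mem_iUnion₂.mpr ⟨P₂, by simp, h⟩
      · have hxC : x ∈ C := by
          rw [hCdef]
          exact fun hc => hxs (interior_subset hc)
        exact mem_iUnion₂.mpr ⟨C, by simp, hxC⟩
    · intro X hX Y hY hXY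
      have h12 : P₁ ∩ P₂ = frontier P₁ ∩ frontier P₂ := hpair P₁ hP₁ P₂ hP₂ hne
      rcases hmemF X hX with hx | hx | hx <;> rcases hmemF Y hY with hy | hy | hy
      · exact absurd (hx.trans hy.symm) hXY
      · rw [hx, hy]; exact h12
      · rw [hx, hy]; exact h1C
      · rw [hx, hy, inter_comm, h12, inter_comm]
      · exact absurd (hx.trans hy.symm) hXY
      · rw [hx, hy]; exact h2C
      · rw [hx, hy, inter_comm, h1C, inter_comm]
      · rw [hx, hy, inter_comm, h2C, inter_comm]
      · exact absurd (hx.trans hy.symm) hXY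
    · intro X hX
      rcases hmemF X hX with h | h | h <;> rw [h]
      · exact ⟨_, hlin1.isAffineFn, hEq1⟩
      · exact ⟨_, hlin2.isAffineFn, hEq2⟩
      · exact ⟨_, hlin0.isAffineFn, hEqC⟩
    · intro X hX
      rcases hmemF X hX with h | h | h <;> rw [h]
      · exact hcone P₁ hP₁
      · exact hcone P₂ hP₂
      · exact hCcone
    · intro X hX
      rcases hmemF X hX with h | h | h <;> rw [h]
      · exact ⟨_, hlin1, hEq1⟩
      · exact ⟨_, hlin2, hEq2⟩
      · exact ⟨_, hlin0, hEqC⟩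
  have hIsCPLrest : IsCPL (p - 1) (fun x => f x - f' x) := by
    set Ps' : Finset (Set E2) := insert (Qc u v) ((Ps.erase P₁).erase P₂) with hPs'def
    have hmem' : ∀ X ∈ Ps', X = Qc u v ∨ (X ∈ Ps ∧ X ≠ P₁ ∧ X ≠ P₂) := by
      intro X hX
      rcases Finset.mem_insert.mp hX with h | h
      · exact Or.inl h
      · obtain ⟨hne2, h'⟩ := Finset.mem_erase.mp h
        obtain ⟨hne1, hmem⟩ := Finset.mem_erase.mp h'
        exact Or.inr ⟨hmem, hne1, hne2⟩
    refine ⟨hcont.sub hf'cont, Ps', ?_, ⟨?_, ?_, ?_, ?_⟩, ?_, ?_⟩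
    · have h2le : 2 ≤ Ps.card := Finset.one_lt_card.mpr ⟨P₁, hP₁, P₂, hP₂, hne⟩
      have hc2 : ((Ps.erase P₁).erase P₂).card = Ps.card - 1 - 1 := by
        rw [Finset.card_erase_of_mem (Finset.mem_erase.mpr ⟨Ne.symm hne, hP₂⟩),
          Finset.card_erase_of_mem hP₁]
      have hins := Finset.card_insert_le (Qc u v) ((Ps.erase P₁).erase P₂)
      rw [hPs'def]
      omega
    · intro X hX
      rcases hmem' X hX with rfl | ⟨hxm, -, -⟩
      · exact isPolygonalPiece_Qc cuv.ne'
      · exact hpoly X hxm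
    · apply eq_univ_of_forall
      intro x
      have hx : x ∈ ⋃ P ∈ Ps, P := by rw [huniv]; trivial
      obtain ⟨P, hPmem, hxP⟩ := mem_iUnion₂.mp hx
      by_cases h1 : P = P₁
      · exact mem_iUnion₂.mpr ⟨Qc u v, Finset.mem_insert_self _ _, hP₁S (by rw [← h1]; exact hxP)⟩
      by_cases h2 : P = P₂
      · exact mem_iUnion₂.mpr ⟨Qc u v, Finset.mem_insert_self _ _, hP₂S (by rw [← h2]; exact hxP)⟩
      exact mem_iUnion₂.mpr ⟨P, Finset.mem_insert.mpr (Or.inr (Finset.mem_erase.mpr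
        ⟨h2, Finset.mem_erase.mpr ⟨h1, hPmem⟩⟩)), hxP⟩
    · intro X hX Y hY hXY
      rcases hmem' X hX with hx | ⟨hxm, hx1, hx2⟩
      · rcases hmem' Y hY with hy | ⟨hym, hy1, hy2⟩
        · exact absurd (hx.trans hy.symm) hXY
        · rw [hx]
          exact hSQ Y hym hy1 hy2
      · rcases hmem' Y hY with hy | ⟨hym, hy1, hy2⟩
        · rw [hy, inter_comm, hSQ X hxm hx1 hx2, inter_comm]
        · exact hpair X hxm Y hym hXY
    · intro X hX
      rcases hmem' X hX with rfl | ⟨hxm, hx1, hx2⟩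
      · refine ⟨G, hGlin.isAffineFn, ?_⟩
        intro x hx
        show f x - f' x = G x
        rw [hf'def]
        simp only [if_pos hx]
        ring
      · obtain ⟨g, hgA, hgE⟩ := hlin X hxm
        refine ⟨g, hgA.isAffineFn, ?_⟩
        intro x hx
        show f x - f' x = g x
        rw [hvanQ X hxm hx1 hx2 x hx, sub_zero]
        exact hgE hx
    · intro X hX
      rcases hmem' X hX with rfl | ⟨hxm, -, -⟩
      · exact Qc_cone u v
      · exact hcone X hxm
    · intro X hX
      rcases hmem' X hX with rfl | ⟨hxm, hx1, hx2⟩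
      · refine ⟨G, hGlin, ?_⟩
        intro x hx
        show f x - f' x = G x
        rw [hf'def]
        simp only [if_pos hx]
        ring
      · obtain ⟨g, hgA, hgE⟩ := hlin X hxm
        refine ⟨g, hgA, ?_⟩
        intro x hx
        show f x - f' x = g x
        rw [hvanQ X hxm hx1 hx2 x hx, sub_zero]
        exact hgE hx
  exact ⟨f', hIsCPL3, hIsCPLrest⟩
/-- If a CPL function with `p ≥ 3` pieces has two adjacent pieces
enclosing an angle less than `π`, then one can subtract a CPL function with at most 3
pieces so that the difference is CPL with at most `p - 1` pieces. -/
theorem cpl_merge_pieces (p : ℕ) (hp : 3 ≤ p) (f : E2 → ℝ)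
    (Ps : Finset (Set E2)) (hcard : Ps.card ≤ p)
    (hcont : Continuous f) (hadm : IsAdmissible f Ps)
    (hcone : ∀ P ∈ Ps, IsConeWithApex 0 P)
    (hlin : ∀ P ∈ Ps, ∃ g : E2 → ℝ, IsLinearFn g ∧ EqOn f g P)
    (P₁ P₂ : Set E2) (hP₁ : P₁ ∈ Ps) (hP₂ : P₂ ∈ Ps) (hne : P₁ ≠ P₂)
    (hadj : ∃ a b : E2, a ≠ b ∧ segment ℝ a b ⊆ P₁ ∩ P₂)
    (hangle : ∃ ℓ : E2 → ℝ, IsLinearFn ℓ ∧ ∀ x ∈ (P₁ ∪ P₂) \ {0}, 0 < ℓ x) :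
    ∃ f' : E2 → ℝ, IsCPL 3 f' ∧ IsCPL (p - 1) (fun x => f x - f' x) := by
  classical
  obtain ⟨ℓ, hℓlin, hℓpos⟩ := hangle
  obtain ⟨A, hA⟩ := (isLinearFn_iff ℓ).mp hℓlin
  have hposU : ∀ x ∈ P₁ ∪ P₂, x ≠ (0:E2) → 0 < dot2 A x := by
    intro x hx hx0
    rw [← hA]
    exact hℓpos x ⟨hx, by simpa using hx0⟩
  have hpos1 : ∀ x ∈ P₁, x ≠ (0:E2) → 0 < dot2 A x := fun x hx => hposU x (Or.inl hx)
  have hpos2 : ∀ x ∈ P₂, x ≠ (0:E2) → 0 < dot2 A x := fun x hx => hposU x (Or.inr hx)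
  obtain ⟨c₁, d₁, hcd₁, hPQ₁, hac₁, had₁⟩ :=
    sector_structure (hadm.1 P₁ hP₁) (hcone P₁ hP₁) hpos1
  obtain ⟨c₂, d₂, hcd₂, hPQ₂, hac₂, had₂⟩ :=
    sector_structure (hadm.1 P₂ hP₂) (hcone P₂ hP₂) hpos2
  obtain ⟨a, b, hab, hseg⟩ := hadj
  have haP : a ∈ P₁ ∩ P₂ := hseg (left_mem_segment ℝ a b)
  have hbP : b ∈ P₁ ∩ P₂ := hseg (right_mem_segment ℝ a b)
  obtain ⟨w, hw0, hwP⟩ : ∃ w : E2, w ≠ 0 ∧ w ∈ P₁ ∩ P₂ := by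
    by_cases ha0 : a = 0
    · refine ⟨b, ?_, hbP⟩
      intro hb0
      exact hab (ha0.trans hb0.symm)
    · exact ⟨a, ha0, haP⟩
  have hfr : P₁ ∩ P₂ = frontier P₁ ∩ frontier P₂ := hadm.2.2.1 P₁ hP₁ P₂ hP₂ hne
  have hwfr : w ∈ frontier P₁ ∩ frontier P₂ := by rw [← hfr]; exact hwP
  have hAw : 0 < dot2 A w := hposU w (Or.inl hwP.1) hw0
  rcases orient hcd₁ hPQ₁ hac₁ had₁ hwfr.1 hw0 with ⟨u, hQ1, cuw, hAu⟩ | ⟨u, hQ1, cwu, hAu⟩ <;>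
    rcases orient hcd₂ hPQ₂ hac₂ had₂ hwfr.2 hw0 with ⟨v, hQ2, cvw, hAv⟩ | ⟨v, hQ2, cwv, hAv⟩
  · -- P₁ = Qc u w, P₂ = Qc v w : impossible (same side)
    refine (no_overlap cuw.ne' cvw.ne' ?_ hQ1 hQ2 hfr).elim
    rw [cross2_anticomm w u, cross2_anticomm w v]
    nlinarith
  · -- P₁ = Qc u w, P₂ = Qc w v
    exact key_lemma p hp f Ps hcard hcont hadm hcone hlin P₁ P₂ hP₁ hP₂ hne
      A u w v hQ1 hQ2 cuw cwv hAu hAw hAv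
  · -- P₁ = Qc w u, P₂ = Qc v w : apply with roles swapped
    exact key_lemma p hp f Ps hcard hcont hadm hcone hlin P₂ P₁ hP₂ hP₁ hne.symm
      A v w u hQ2 hQ1 cvw cwu hAv hAw hAu
  · -- P₁ = Qc w u, P₂ = Qc w v : impossible (same side)
    refine (no_overlap ?_ ?_ (mul_pos cwu cwv) (hQ1.trans (Qc_comm w u))
      (hQ2.trans (Qc_comm w v)) hfr).elim
    · rw [cross2_anticomm]
      exact neg_ne_zero.mpr cwu.ne'
    · rw [cross2_anticomm]
      exact neg_ne_zero.mpr cwv.ne'
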